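/- Let Ĥ be an (n+k) × n matrix over F₂ with all entries i.i.d. uniform. Then Pr(Rank(Ĥ) = n − s) = S(n−s, k+s)·2^{−(k+s)s}·∏_{i=s+1}^{n}(1 − 2^{−i}) for each 0 ≤ s ≤ n, where S(ω,l) = Σ_{0 ≤ i₁ ≤ ⋯ ≤ i_l ≤ ω} 2^{-(i₁+⋯+i_l)}. -/

import Mathlib

/-- `S ω l` = sum over all nondecreasing tuples `0 ≤ i₁ ≤ ⋯ ≤ i_l ≤ ω`
of `2^{-(i₁+⋯+i_l)}`, with `S ω 0 = 1`. -/
noncomputable def S (ω l : ℕ) : ℝ := by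
  classical
  exact ∑ f ∈ Finset.univ.filter (fun f : Fin l → Fin (ω + 1) => Monotone f),
    (1 / 2 : ℝ) ^ (∑ i, (f i : ℕ))

open Finset Submodule Module Matrix

section Spart


lemma S_zero_right (ω : ℕ) : S ω 0 = 1 := by
  classical
  rw [S]
  rw [Finset.filter_true_of_mem (fun f _ => by intro a b _; exact a.elim0)]
  simp

lemma S_zero_left (l : ℕ) : S 0 l = 1 := by
  classical
  rw [S]
  rw [Finset.filter_true_of_mem (fun f _ => by intro a b _; exact Fin.le_def.mpr (by omega))]
  have h1 : ∀ f : Fin l → Fin 1, (∑ i, ((f i : ℕ))) = 0 := by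
    intro f; apply Finset.sum_eq_zero; intro i _; simp [Fin.val_eq_zero]
  simp only [h1, pow_zero]
  simp

lemma monotone_cons_iff {n : ℕ} {g : Fin n → Fin (m+1)} :
    Monotone (Fin.cons 0 g : Fin (n+1) → Fin (m+1)) ↔ Monotone g := by
  constructor
  · intro h a b hab
    have := h (show (a.succ : Fin (n+1)) ≤ b.succ by simpa [Fin.succ_le_succ_iff] using hab)
    simpa using this
  · intro h a b hab
    induction a using Fin.cases with
    | zero =>
      induction b using Fin.cases with
      | zero => exact le_rfl
      | succ b => simpa using Fin.zero_le _
    | succ a =>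
      induction b using Fin.cases with
      | zero => exact absurd (Fin.le_zero_iff.mp hab) (Fin.succ_ne_zero a)
      | succ b =>
        have hab' : a ≤ b := by simpa [Fin.succ_le_succ_iff] using hab
        simpa using h hab'

lemma S_rec (ω l : ℕ) :
    S (ω+1) (l+1) = S (ω+1) l + (1/2 : ℝ)^(l+1) * S ω (l+1) := by
  classical
  rw [S, ← Finset.sum_filter_add_sum_filter_not _ (fun f => f 0 = 0)]
  congr 1
  · -- first-entry-zero part equals S (ω+1) l
    rw [S]
    refine Finset.sum_bij' (fun f _ => Fin.tail f) (fun g _ => Fin.cons 0 g) ?hi ?hj ?li ?ri ?h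
    case hi =>
      intro f hf
      simp only [mem_filter, mem_univ, true_and] at hf ⊢
      intro a b hab
      exact hf.1 (by simpa [Fin.succ_le_succ_iff] using hab)
    case hj =>
      intro g hg
      simp only [mem_filter, mem_univ, true_and] at hg ⊢
      refine ⟨monotone_cons_iff.mpr hg, by simp⟩
    case li =>
      intro f hf
      simp only [mem_filter, mem_univ, true_and] at hf
      funext i
      induction i using Fin.cases with
      | zero => simpa using hf.2.symm
      | succ j => simp [Fin.tail]
    case ri =>
      intro g _
      exact Fin.tail_cons _ _
    case h =>
      intro f hf
      simp only [mem_filter, mem_univ, true_and] at hf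
      congr 1
      rw [Fin.sum_univ_succ, hf.2]
      simp [Fin.tail]
  · -- first-entry-nonzero part
    rw [S, Finset.mul_sum]
    refine Finset.sum_bij' (fun (f : Fin (l+1) → Fin (ω+2)) _ =>
        (fun i => (⟨(f i : ℕ) - 1, by omega⟩ : Fin (ω+1))))
      (fun (g : Fin (l+1) → Fin (ω+1)) _ => (fun i => (g i).succ)) ?hi ?hj ?li ?ri ?h
    case hi =>
      intro f hf
      simp only [mem_filter, mem_univ, true_and] at hf ⊢
      obtain ⟨hmono, hne⟩ := hf
      intro a b hab
      have h1 := hmono hab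
      have h0 : (0:Fin (ω+2)) < f 0 := lt_of_le_of_ne (Fin.zero_le _) (Ne.symm hne)
      have h2 : f 0 ≤ f a := hmono (Fin.zero_le a)
      simp only [Fin.le_def] at h1 h2 ⊢
      have h3 : (0:ℕ) < (f 0 : ℕ) := h0
      omega
    case hj =>
      intro g hg
      simp only [mem_filter, mem_univ, true_and] at hg ⊢
      constructor
      · intro a b hab
        have := hg hab
        simp only [Fin.le_def] at this ⊢
        simpa using this
      · exact Fin.succ_ne_zero _
    case li =>
      intro f hf
      simp only [mem_filter, mem_univ, true_and] at hf
      obtain ⟨hmono, hne⟩ := hf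
      funext i
      have h0 : (0:Fin (ω+2)) < f 0 := lt_of_le_of_ne (Fin.zero_le _) (Ne.symm hne)
      have h2 : f 0 ≤ f i := hmono (Fin.zero_le i)
      have h3 : (0:ℕ) < (f 0 : ℕ) := h0
      simp only [Fin.le_def] at h2
      simp [Fin.ext_iff, Fin.val_succ]
      omega
    case ri =>
      intro g _
      funext i
      simp [Fin.ext_iff]
    case h =>
      intro f hf
      simp only [mem_filter, mem_univ, true_and] at hf
      obtain ⟨hmono, hne⟩ := hf
      have h0 : (0:Fin (ω+2)) < f 0 := lt_of_le_of_ne (Fin.zero_le _) (Ne.symm hne)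
      have h3 : (0:ℕ) < (f 0 : ℕ) := h0
      have hpos : ∀ i, (0:ℕ) < (f i : ℕ) := fun i =>
        lt_of_lt_of_le h3 (Fin.le_def.mp (hmono (Fin.zero_le i)))
      rw [← pow_add]
      congr 1
      show (∑ i, ((f i : ℕ))) = (l + 1) + ∑ i, ((f i : ℕ) - 1)
      have e2 : (∑ i, ((f i :ℕ) - 1)) + (∑ _i : Fin (l+1), 1) = ∑ i, (f i : ℕ) := by
        rw [← Finset.sum_add_distrib]
        apply Finset.sum_congr rfl
        intro i _
        have := hpos i
        omega
      simp only [Finset.sum_const, card_univ, Fintype.card_fin, smul_eq_mul, mul_one] at e2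
      omega

lemma geom1 (ω : ℕ) : (1 - (1/2:ℝ)) * S ω 1 = 1 - (1/2:ℝ)^(ω+1) := by
  induction ω with
  | zero => norm_num [S_zero_left]
  | succ ω ih =>
    have h := S_rec ω 0
    rw [S_zero_right] at h
    rw [h]
    ring_nf
    ring_nf at ih
    nlinarith [ih]

lemma geom2 (l : ℕ) : (1 - (1/2:ℝ)) * S 1 l = 1 - (1/2:ℝ)^(l+1) := by
  induction l with
  | zero => norm_num [S_zero_right]
  | succ l ih =>
    have h := S_rec 0 l
    rw [S_zero_left] at h
    rw [h]
    ring_nf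
    ring_nf at ih
    nlinarith [ih]

lemma S_key : ∀ l ω : ℕ, (1 - (1/2:ℝ)^(ω+1)) * S (ω+1) l = (1 - (1/2:ℝ)^(l+1)) * S ω (l+1) := by
  intro l
  induction l with
  | zero =>
    intro ω
    rw [S_zero_right, mul_one, ← geom1 ω]
    norm_num
  | succ l ih =>
    intro ω
    induction ω with
    | zero =>
      rw [S_zero_left, mul_one, ← geom2 (l+1)]
      norm_num
    | succ ω ihω =>
      have h1 := S_rec (ω+1) l
      have h2 := S_rec ω (l+1)
      have h3 := ih (ω+1)
      rw [h1, h2]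
      linear_combination h3 + (1/2:ℝ)^(l+2) * ihω

end Spart

section Counting

abbrev F2 := ZMod 2


noncomputable def colSpan {m n : ℕ} (B : Matrix (Fin m) (Fin n) F2) :
    Submodule F2 (Fin m → F2) := Submodule.span F2 (Set.range Bᵀ)

lemma rank_eq_colSpan {m n : ℕ} (B : Matrix (Fin m) (Fin n) F2) :
    B.rank = finrank F2 (colSpan B) := Matrix.rank_eq_finrank_span_cols B

def colSplit (m n : ℕ) :
    Matrix (Fin m) (Fin (n+1)) F2 ≃ (Matrix (Fin m) (Fin n) F2) × (Fin m → F2) where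
  toFun A := (fun i j => A i j.succ, fun i => A i 0)
  invFun p := fun i j => (Fin.cons (p.2 i) (p.1 i) : Fin (n+1) → F2) j
  left_inv A := by
    funext i j
    induction j using Fin.cases <;> simp
  right_inv p := by
    ext i j <;> simp

lemma colSplit_symm_transpose {m n : ℕ} (B : Matrix (Fin m) (Fin n) F2) (c : Fin m → F2) :
    ((colSplit m n).symm (B, c))ᵀ = Fin.cons c Bᵀ := by
  funext j i
  induction j using Fin.cases <;> rfl

lemma colSpan_symm {m n : ℕ} (B : Matrix (Fin m) (Fin n) F2) (c : Fin m → F2) :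
    colSpan ((colSplit m n).symm (B, c)) = (F2 ∙ c) ⊔ colSpan B := by
  rw [colSpan, colSplit_symm_transpose, Fin.range_cons (α := Fin m → F2) c Bᵀ, Submodule.span_insert]
  rfl

lemma rank_symm_mem {m n : ℕ} (B : Matrix (Fin m) (Fin n) F2) (c : Fin m → F2)
    (hc : c ∈ colSpan B) :
    ((colSplit m n).symm (B, c)).rank = B.rank := by
  rw [rank_eq_colSpan, rank_eq_colSpan, colSpan, colSpan, colSplit_symm_transpose,
    Fin.range_cons (α := Fin m → F2) c Bᵀ, Submodule.span_insert_eq_span hc]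

lemma rank_symm_not_mem {m n : ℕ} (B : Matrix (Fin m) (Fin n) F2) (c : Fin m → F2)
    (hc : c ∉ colSpan B) :
    ((colSplit m n).symm (B, c)).rank = B.rank + 1 := by
  rw [rank_eq_colSpan, rank_eq_colSpan, colSpan_symm]
  have hc0 : c ≠ 0 := fun h => hc (h ▸ (colSpan B).zero_mem)
  have hinf : (F2 ∙ c) ⊓ colSpan B = ⊥ := by
    rw [eq_bot_iff]
    rintro x ⟨hx1, hx2⟩
    rcases Submodule.mem_span_singleton.mp hx1 with ⟨a, rfl⟩
    rcases eq_or_ne a 0 with rfl | ha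
    · simp
    · exact absurd (by simpa [ha] using (colSpan B).smul_mem a⁻¹ hx2) hc
  have := Submodule.finrank_sup_add_finrank_inf_eq (F2 ∙ c) (colSpan B)
  rw [hinf] at this
  rw [finrank_span_singleton hc0] at this
  simp only [finrank_bot, add_zero] at this
  omega

noncomputable def cnt (m n r : ℕ) : ℕ :=
  Nat.card {A : Matrix (Fin m) (Fin n) F2 // A.rank = r}

lemma card_mem_colSpan {m n : ℕ} (B : Matrix (Fin m) (Fin n) F2) :
    Nat.card {c : Fin m → F2 // c ∈ colSpan B} = 2 ^ B.rank := by
  haveI : Fintype (colSpan B) := Fintype.ofFinite _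
  rw [rank_eq_colSpan, Nat.card_eq_fintype_card, card_eq_pow_finrank (K := F2), ZMod.card]

lemma card_not_mem_colSpan {m n : ℕ} (B : Matrix (Fin m) (Fin n) F2) :
    Nat.card {c : Fin m → F2 // c ∉ colSpan B} = 2 ^ m - 2 ^ B.rank := by
  classical
  haveI : Fintype (colSpan B) := Fintype.ofFinite _
  rw [Nat.card_eq_fintype_card, Fintype.card_subtype_compl]
  have h1 : Fintype.card (Fin m → F2) = 2 ^ m := by simp [ZMod.card]
  have h2 : Fintype.card {c : Fin m → F2 // c ∈ colSpan B} = 2 ^ B.rank := by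
    rw [← Nat.card_eq_fintype_card, card_mem_colSpan]
  rw [h1, h2]

lemma matrix_rank_zero_iff {m n : ℕ} (A : Matrix (Fin m) (Fin n) F2) :
    A.rank = 0 ↔ A = 0 := by
  constructor
  · intro h
    rw [rank_eq_colSpan] at h
    have hbot : colSpan A = ⊥ := Submodule.finrank_eq_zero.mp h
    have hcols : ∀ j, Aᵀ j = 0 := by
      intro j
      have : Aᵀ j ∈ colSpan A := Submodule.subset_span ⟨j, rfl⟩
      rw [hbot] at this
      simpa using this
    ext i j
    have := congrFun (hcols j) i
    simpa using this
  · rintro rfl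
    exact Matrix.rank_zero

lemma cnt_zero (m n : ℕ) : cnt m n 0 = 1 := by
  rw [cnt]
  have : ∀ A : Matrix (Fin m) (Fin n) F2, A.rank = 0 ↔ A = 0 := matrix_rank_zero_iff
  rw [Nat.card_eq_one_iff_unique]
  constructor
  · constructor
    rintro ⟨A, hA⟩ ⟨B, hB⟩
    apply Subtype.ext
    show A = B
    rw [(this A).mp hA, (this B).mp hB]
  · exact ⟨⟨0, Matrix.rank_zero⟩⟩

lemma cnt_overflow (m n r : ℕ) (h : n < r) : cnt m n r = 0 := by
  rw [cnt, Nat.card_eq_zero]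
  left
  constructor
  rintro ⟨A, hA⟩
  have := A.rank_le_width
  omega

lemma cnt_succ (m n r : ℕ) :
    cnt m (n+1) (r+1) = cnt m n (r+1) * 2^(r+1) + cnt m n r * (2^m - 2^r) := by
  classical
  rw [cnt]
  have e1 : {A : Matrix (Fin m) (Fin (n+1)) F2 // A.rank = r+1} ≃
      {p : (Matrix (Fin m) (Fin n) F2) × (Fin m → F2) //
        ((colSplit m n).symm (p.1, p.2)).rank = r+1} :=
    (Equiv.subtypeEquiv (colSplit m n) (fun A => by
      rw [show ((((colSplit m n) A).1, ((colSplit m n) A).2) : _ × _) = (colSplit m n) A from rfl,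
        Equiv.symm_apply_apply]))
  have e2 := e1.trans (Equiv.subtypeProdEquivSigmaSubtype
      (fun B c => ((colSplit m n).symm (B, c)).rank = r+1))
  rw [Nat.card_congr e2]
  haveI : ∀ B : Matrix (Fin m) (Fin n) F2,
      Fintype {c : Fin m → F2 // ((colSplit m n).symm (B, c)).rank = r+1} :=
    fun B => Fintype.ofFinite _
  rw [Nat.card_eq_fintype_card, Fintype.card_sigma]
  have fiber : ∀ B : Matrix (Fin m) (Fin n) F2,
      Fintype.card {c : Fin m → F2 // ((colSplit m n).symm (B, c)).rank = r+1}
      = (if B.rank = r+1 then 2^(r+1) else 0) + (if B.rank = r then 2^m - 2^r else 0) := by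
    intro B
    by_cases h1 : B.rank = r + 1
    · rw [if_pos h1, if_neg (by omega), add_zero]
      rw [← Nat.card_eq_fintype_card]
      have : {c : Fin m → F2 // ((colSplit m n).symm (B, c)).rank = r+1} ≃
          {c : Fin m → F2 // c ∈ colSpan B} := by
        apply Equiv.subtypeEquivRight
        intro c
        constructor
        · intro hc
          by_contra hmem
          rw [rank_symm_not_mem B c hmem] at hc
          omega
        · intro hmem
          rw [rank_symm_mem B c hmem, h1]
      rw [Nat.card_congr this, card_mem_colSpan, h1]
    · by_cases h2 : B.rank = r
      · rw [if_neg h1, if_pos h2, zero_add, ← Nat.card_eq_fintype_card]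
        have : {c : Fin m → F2 // ((colSplit m n).symm (B, c)).rank = r+1} ≃
            {c : Fin m → F2 // c ∉ colSpan B} := by
          apply Equiv.subtypeEquivRight
          intro c
          constructor
          · intro hc
            intro hmem
            rw [rank_symm_mem B c hmem] at hc
            omega
          · intro hmem
            rw [rank_symm_not_mem B c hmem, h2]
        rw [Nat.card_congr this, card_not_mem_colSpan, h2]
      · rw [if_neg h1, if_neg h2, add_zero]
        rw [Fintype.card_eq_zero_iff]
        constructor
        rintro ⟨c, hc⟩
        by_cases hmem : c ∈ colSpan B
        · rw [rank_symm_mem B c hmem] at hc; omega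
        · rw [rank_symm_not_mem B c hmem] at hc; omega
  simp only [fiber]
  rw [Finset.sum_add_distrib]
  congr 1
  · rw [← Finset.sum_filter, Finset.sum_const, smul_eq_mul]
    congr 1
    rw [cnt, Nat.card_eq_fintype_card, Fintype.card_subtype]
  · rw [← Finset.sum_filter, Finset.sum_const, smul_eq_mul]
    congr 1
    rw [cnt, Nat.card_eq_fintype_card, Fintype.card_subtype]

end Counting

section Main


noncomputable def Rhs (n k s : ℕ) : ℝ :=
  S (n-s) (k+s) * (1/2 : ℝ) ^ ((k+s)*s) * ∏ i ∈ Finset.Icc (s+1) n, (1 - (1/2:ℝ)^i)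

lemma rhs_top (n k : ℕ) : Rhs n k n = (1/2:ℝ) ^ ((k+n)*n) := by
  rw [Rhs, Nat.sub_self, S_zero_left, one_mul, Finset.Icc_eq_empty (by omega), Finset.prod_empty,
    mul_one]

lemma main_top (n k : ℕ) : ((cnt (n+k) n 0 : ℕ) : ℝ) / 2^((n+k)*n) = Rhs n k n := by
  rw [cnt_zero, rhs_top, Nat.cast_one, one_div, ← inv_pow, ← one_div]
  rw [Nat.add_comm n k]

lemma key0 (n k : ℕ) : Rhs n (k+1) 0 * (1 - (1/2:ℝ)^(k+1)) = Rhs (n+1) k 0 := by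
  have hk := S_key k n
  rw [Rhs, Rhs]
  rw [Finset.prod_Icc_succ_top (by omega : 0 + 1 ≤ n + 1)]
  simp only [Nat.sub_zero, Nat.add_zero, Nat.mul_zero, pow_zero, mul_one]
  linear_combination (∏ i ∈ Finset.Icc (0+1) n, (1 - (1/2:ℝ)^i)) * hk.symm

lemma key1 (n k t : ℕ) (h : t + 1 ≤ n) :
    Rhs n (k+1) t * (1/2:ℝ)^(k+t+1) + Rhs n (k+1) (t+1) * (1 - (1/2:ℝ)^(k+t+2)) =
      Rhs (n+1) k (t+1) := by
  obtain ⟨ω, rfl⟩ : ∃ ω, n = ω + (t+1) := ⟨n - (t+1), by omega⟩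
  have hk := S_key (k+t+1) ω
  rw [Rhs, Rhs, Rhs]
  have e1 : ω + (t+1) - t = ω + 1 := by omega
  have e2 : ω + (t+1) - (t+1) = ω := by omega
  have e3 : ω + (t+1) + 1 - (t+1) = ω + 1 := by omega
  rw [e1, e2, e3]
  -- split bottom of first product
  have p1 : (∏ i ∈ Finset.Icc (t+1) (ω+(t+1)), (1 - (1/2:ℝ)^i))
      = (1 - (1/2:ℝ)^(t+1)) * ∏ i ∈ Finset.Icc (t+2) (ω+(t+1)), (1 - (1/2:ℝ)^i) := by
    rw [← Finset.Ico_add_one_right_eq_Icc, ← Finset.Ico_add_one_right_eq_Icc,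
      Finset.prod_eq_prod_Ico_succ_bot (by omega)]
  -- split top of RHS product
  have p2 : (∏ i ∈ Finset.Icc (t+1+1) (ω+(t+1)+1), (1 - (1/2:ℝ)^i))
      = (∏ i ∈ Finset.Icc (t+2) (ω+(t+1)), (1 - (1/2:ℝ)^i)) * (1 - (1/2:ℝ)^(ω+(t+1)+1)) := by
    rw [Finset.prod_Icc_succ_top (by omega)]
  rw [p1, p2]
  have hkt : k + 1 + t = k + t + 1 := by omega
  have hkt2 : k + 1 + (t+1) = k + t + 2 := by omega
  have hkt3 : k + (t+1) = k + t + 1 := by omega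
  rw [hkt, hkt2, hkt3]
  linear_combination (-(1/2:ℝ)^(t+1) * (1/2:ℝ)^((k+t+1)*(t+1)) *
    (∏ i ∈ Finset.Icc (t+2) (ω+(t+1)), (1 - (1/2:ℝ)^i))) * hk

theorem main : ∀ n k s : ℕ, s ≤ n →
    ((cnt (n+k) n (n-s) : ℕ) : ℝ) / 2^((n+k)*n) = Rhs n k s := by
  intro n
  induction n with
  | zero =>
    intro k s hs
    have : s = 0 := by omega
    subst this
    simpa using main_top 0 k
  | succ n ih =>
    intro k s hs
    rcases Nat.eq_or_lt_of_le hs with rfl | hlt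
    · simpa using main_top (n+1) k
    · have hs' : s ≤ n := by omega
      have hr : (n+1) - s = (n - s) + 1 := by omega
      have hm : n + 1 + k = n + (k+1) := by omega
      rw [hr, hm, cnt_succ]
      rcases Nat.eq_zero_or_pos s with rfl | hspos
      · -- s = 0 case
        have hov : cnt (n+(k+1)) n (n - 0 + 1) = 0 := cnt_overflow _ _ _ (by omega)
        rw [hov, Nat.sub_zero]
        have hb := ih (k+1) 0 (by omega)
        rw [Nat.sub_zero] at hb
        have hbe : ((cnt (n+(k+1)) n n : ℕ) : ℝ) = Rhs n (k+1) 0 * 2^((n+(k+1))*n) := by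
          rw [← hb]
          field_simp
        have hle : (2:ℕ)^n ≤ 2^(n+(k+1)) := Nat.pow_le_pow_right (by omega) (by omega)
        rw [← key0 n k]
        push_cast [Nat.cast_sub hle]
        rw [hbe]
        simp only [one_div, inv_pow]
        rw [div_eq_iff (by positivity)]
        field_simp
        ring
      · -- s = t+1 case
        obtain ⟨t, rfl⟩ : ∃ t, s = t + 1 := ⟨s - 1, by omega⟩
        obtain ⟨u, rfl⟩ : ∃ u, n = u + t + 1 := ⟨n - t - 1, by omega⟩
        have e1 : u + t + 1 - (t+1) + 1 = u + 1 := by omega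
        have e2 : u + t + 1 - (t+1) = u := by omega
        rw [e1, e2]
        have ha := ih (k+1) t (by omega)
        have hb := ih (k+1) (t+1) (by omega)
        have e3 : u + t + 1 - t = u + 1 := by omega
        rw [e3] at ha
        rw [e2] at hb
        have hae : ((cnt (u+t+1+(k+1)) (u+t+1) (u+1) : ℕ) : ℝ)
            = Rhs (u+t+1) (k+1) t * 2^((u+t+1+(k+1))*(u+t+1)) := by
          rw [← ha]; field_simp
        have hbe : ((cnt (u+t+1+(k+1)) (u+t+1) u : ℕ) : ℝ)
            = Rhs (u+t+1) (k+1) (t+1) * 2^((u+t+1+(k+1))*(u+t+1)) := by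
          rw [← hb]; field_simp
        have hle : (2:ℕ)^u ≤ 2^(u+t+1+(k+1)) := Nat.pow_le_pow_right (by omega) (by omega)
        rw [← key1 (u+t+1) k t (by omega)]
        push_cast [Nat.cast_sub hle]
        rw [hae, hbe]
        simp only [one_div, inv_pow]
        rw [div_eq_iff (by positivity)]
        field_simp
        ring

end Main

/-- For an `(n+k) × n` matrix over `F₂` with i.i.d. uniform entries (uniform counting over
all `2^{(n+k)n}` matrices), `Pr(Rank = n − s) = S(n−s,k+s)·2^{−(k+s)s}·∏_{i=s+1}^{n}(1−2^{−i})`. -/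
theorem stmt_7 (n k s : ℕ) (hs : s ≤ n) :
    (Nat.card {A : Matrix (Fin (n + k)) (Fin n) (ZMod 2) // A.rank = n - s} : ℝ)
        / 2 ^ ((n + k) * n)
      = S (n - s) (k + s) * (1 / 2 : ℝ) ^ ((k + s) * s) *
          ∏ i ∈ Finset.Icc (s + 1) n, (1 - (1 / 2 : ℝ) ^ i) := by
  have h := main n k s hs
  rw [cnt] at h
  rw [Rhs] at h
  exact h
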